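/- (Proposition 2) Let f₁ : [0,1] → ℝ be twice continuously differentiable, and set f₃(t) = f₁(t) − (1/t²) ∫₀ᵗ x f₁(x) dx. Then for every σ₀ > −1, the set Σ ∩ {σ ∈ ℂ : Re σ > σ₀} = {σ ∈ ℂ : Re σ > σ₀ and ∫₀¹ t^σ f₃(t) dt = 1} is finite. -/

import Mathlib

set_option maxHeartbeats 1000000

open MeasureTheory Set Filter

theorem stmt13 (f₁ : ℝ → ℝ) (hf₁ : ContDiffOn ℝ 2 f₁ (Set.Icc 0 1))
    (σ₀ : ℝ) (hσ₀ : -1 < σ₀) :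
    {σ : ℂ | σ₀ < σ.re ∧
      (∫ t in (0:ℝ)..1,
          (t : ℂ) ^ σ * ((f₁ t - (1 / t ^ 2) * ∫ x in (0:ℝ)..t, x * f₁ x : ℝ) : ℂ)) = 1}.Finite := by
  classical
  obtain ⟨M₀, hM₀⟩ := isCompact_Icc.exists_bound_of_continuousOn hf₁.continuousOn
  set M : ℝ := max M₀ 1 with hMdef
  have hM1 : (1:ℝ) ≤ M := le_max_right _ _
  have hM0 : (0:ℝ) < M := lt_of_lt_of_le one_pos hM1
  have hf₁b : ∀ x ∈ Set.Icc (0:ℝ) 1, ‖f₁ x‖ ≤ M := fun x hx => (hM₀ x hx).trans (le_max_left _ _)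
  set G : ℝ → ℝ := fun t => ∫ x in (0:ℝ)..t, x * f₁ x with hGdef
  set h : ℝ → ℂ := fun t => ((f₁ t - (1 / t ^ 2) * G t : ℝ) : ℂ) with hhdef
  -- bound on G
  have hGb : ∀ t ∈ Set.Icc (0:ℝ) 1, ‖G t‖ ≤ M * t ^ 2 := by
    intro t ht
    have h1 : ∀ x ∈ Set.uIoc (0:ℝ) t, ‖x * f₁ x‖ ≤ M * t := by
      intro x hx
      rw [Set.uIoc_of_le ht.1] at hx
      have hx1 : x ∈ Set.Icc (0:ℝ) 1 := ⟨hx.1.le, hx.2.trans ht.2⟩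
      have := hf₁b x hx1
      rw [norm_mul, Real.norm_eq_abs x, abs_of_pos hx.1]
      have hxt : x ≤ t := hx.2
      nlinarith [norm_nonneg (f₁ x), hx.1.le]
    have h2 := intervalIntegral.norm_integral_le_of_norm_le_const h1
    rw [sub_zero, abs_of_nonneg ht.1] at h2
    calc ‖G t‖ ≤ M * t * t := h2
      _ = M * t ^ 2 := by ring
  -- bound on h
  have hhb : ∀ t ∈ Set.Ioc (0:ℝ) 1, ‖h t‖ ≤ 2 * M := by
    intro t ht
    have ht2 : (0:ℝ) < t ^ 2 := pow_pos ht.1 2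
    have hf := hf₁b t ⟨ht.1.le, ht.2⟩
    have hG := hGb t ⟨ht.1.le, ht.2⟩
    rw [hhdef]
    simp only [Complex.norm_real]
    rw [Real.norm_eq_abs] at *
    have : |f₁ t - 1 / t ^ 2 * G t| ≤ |f₁ t| + |1 / t ^ 2 * G t| := abs_sub _ _
    have h3 : |1 / t ^ 2 * G t| = (1 / t ^ 2) * |G t| := by
      rw [abs_mul, abs_of_pos (one_div_pos.mpr ht2)]
    have h4 : (1 / t ^ 2) * |G t| ≤ (1 / t ^ 2) * (M * t ^ 2) := by
      apply mul_le_mul_of_nonneg_left hG (by positivity)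
    have h5 : (1 / t ^ 2) * (M * t ^ 2) = M := by field_simp [ht.1.ne']
    linarith
  -- continuity
  have hxf : ContinuousOn (fun x : ℝ => x * f₁ x) (Set.Icc 0 1) :=
    continuousOn_id.mul hf₁.continuousOn
  have hGcont : ContinuousOn G (Set.Icc 0 1) := by
    have : Set.Icc (0:ℝ) 1 = Set.uIcc (0:ℝ) 1 := (Set.uIcc_of_le zero_le_one).symm
    rw [this]
    exact intervalIntegral.continuousOn_primitive_interval
      (by rw [← this]; exact hxf.integrableOn_Icc)
  have hhcont : ContinuousOn h (Set.Ioc 0 1) := by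
    apply Complex.continuous_ofReal.comp_continuousOn
    apply ContinuousOn.sub (hf₁.continuousOn.mono Set.Ioc_subset_Icc_self)
    apply ContinuousOn.mul
    · apply ContinuousOn.div continuousOn_const (continuousOn_pow 2)
      intro t ht; exact pow_ne_zero 2 (ne_of_gt ht.1)
    · exact hGcont.mono Set.Ioc_subset_Icc_self
  set g : ℂ → ℂ := fun σ => ∫ t in Set.Ioc (0:ℝ) 1, (t:ℂ) ^ σ * h t with hgdef
  have hIoc : ∀ σ : ℂ, (∫ t in (0:ℝ)..1, (t:ℂ) ^ σ * h t) = g σ := fun σ =>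
    intervalIntegral.integral_of_le zero_le_one
  -- integrability
  have hint : ∀ σ : ℂ, -1 < σ.re →
      MeasureTheory.IntegrableOn (fun t : ℝ => (t:ℂ) ^ σ * h t) (Set.Ioc (0:ℝ) 1) := by
    intro σ hσ
    have hcont : ContinuousOn (fun t : ℝ => (t:ℂ) ^ σ * h t) (Set.Ioc (0:ℝ) 1) := by
      apply ContinuousOn.mul ?_ hhcont
      intro t ht
      exact (Complex.continuousAt_ofReal_cpow_const t σ (Or.inr (ne_of_gt ht.1))).continuousWithinAt
    have hmeas : AEStronglyMeasurable (fun t : ℝ => (t:ℂ) ^ σ * h t)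
        (volume.restrict (Set.Ioc (0:ℝ) 1)) := hcont.aestronglyMeasurable measurableSet_Ioc
    have hdom : MeasureTheory.IntegrableOn (fun t : ℝ => 2 * M * t ^ σ.re)
        (Set.Ioc (0:ℝ) 1) := by
      have := (intervalIntegral.intervalIntegrable_rpow' (a := 0) (b := 1) hσ).const_mul (2*M)
      rwa [intervalIntegrable_iff_integrableOn_Ioc_of_le zero_le_one] at this
    refine MeasureTheory.Integrable.mono hdom hmeas ?_
    rw [MeasureTheory.ae_restrict_iff' measurableSet_Ioc]
    filter_upwards with t ht
    rw [norm_mul, Complex.norm_cpow_eq_rpow_re_of_pos ht.1]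
    calc t ^ σ.re * ‖h t‖ ≤ t ^ σ.re * (2*M) :=
          mul_le_mul_of_nonneg_left (hhb t ht) (Real.rpow_nonneg ht.1.le _)
      _ ≤ ‖2 * M * t ^ σ.re‖ := by
          rw [Real.norm_eq_abs, abs_of_nonneg (mul_nonneg (by linarith) (Real.rpow_nonneg ht.1.le _))]; ring_nf; exact le_refl _
  -- basic bound
  have hrint : ∀ r : ℝ, -1 < r → ∫ t in Set.Ioc (0:ℝ) 1, t ^ r = 1 / (r + 1) := by
    intro r hr
    rw [← intervalIntegral.integral_of_le zero_le_one, integral_rpow (Or.inl hr),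
      Real.one_rpow, Real.zero_rpow (by linarith : r + 1 ≠ 0)]
    ring
  have hbound : ∀ σ : ℂ, -1 < σ.re → ‖g σ‖ ≤ 2 * M / (σ.re + 1) := by
    intro σ hσ
    have hdom : MeasureTheory.IntegrableOn (fun t : ℝ => 2 * M * t ^ σ.re)
        (Set.Ioc (0:ℝ) 1) := by
      have := (intervalIntegral.intervalIntegrable_rpow' (a := 0) (b := 1) hσ).const_mul (2*M)
      rwa [intervalIntegrable_iff_integrableOn_Ioc_of_le zero_le_one] at this
    have h1 : ‖g σ‖ ≤ ∫ t in Set.Ioc (0:ℝ) 1, 2 * M * t ^ σ.re := by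
      apply MeasureTheory.norm_integral_le_of_norm_le hdom
      rw [MeasureTheory.ae_restrict_iff' measurableSet_Ioc]
      filter_upwards with t ht
      rw [norm_mul, Complex.norm_cpow_eq_rpow_re_of_pos ht.1]
      calc t ^ σ.re * ‖h t‖ ≤ t ^ σ.re * (2*M) :=
            mul_le_mul_of_nonneg_left (hhb t ht) (Real.rpow_nonneg ht.1.le _)
        _ = 2 * M * t ^ σ.re := by ring
    rw [MeasureTheory.integral_const_mul, hrint σ.re hσ] at h1
    calc ‖g σ‖ ≤ 2 * M * (1 / (σ.re + 1)) := h1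
      _ = 2 * M / (σ.re + 1) := by ring
  -- analyticity
  have hUopen : IsOpen {σ : ℂ | (-1:ℝ) < σ.re} := isOpen_lt continuous_const Complex.continuous_re
  set H : ℝ → ℂ := (Set.Ioc (0:ℝ) 1).indicator h with hHdef
  have hhint : MeasureTheory.IntegrableOn h (Set.Ioc (0:ℝ) 1) := by
    refine MeasureTheory.Integrable.mono
      (MeasureTheory.integrableOn_const (C := (2*M : ℝ)) (s := Set.Ioc (0:ℝ) 1) (μ := volume) ?_)
      (hhcont.aestronglyMeasurable measurableSet_Ioc) ?_
    · rw [Real.volume_Ioc]; exact ENNReal.ofReal_ne_top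
    · rw [MeasureTheory.ae_restrict_iff' measurableSet_Ioc]
      filter_upwards with t ht
      rw [Real.norm_eq_abs, abs_of_pos (by linarith : (0:ℝ) < 2 * M)]
      exact hhb t ht
  have hHint : MeasureTheory.Integrable H := hhint.integrable_indicator measurableSet_Ioc
  have hH_loc : MeasureTheory.LocallyIntegrableOn H (Set.Ioi (0:ℝ)) :=
    (hHint.integrableOn).locallyIntegrableOn
  have hgm : g = fun σ => mellin H (σ + 1) := by
    funext σ
    rw [hgdef]
    simp only [mellin, add_sub_cancel_right]
    have heq : ∀ t : ℝ, (t:ℂ) ^ σ • H t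
        = (Set.Ioc (0:ℝ) 1).indicator (fun t : ℝ => (t:ℂ) ^ σ * h t) t := by
      intro t
      by_cases ht : t ∈ Set.Ioc (0:ℝ) 1
      · simp [hHdef, Set.indicator_of_mem ht, smul_eq_mul]
      · simp [hHdef, Set.indicator_of_notMem ht]
    simp only [heq]
    rw [MeasureTheory.integral_indicator measurableSet_Ioc,
      MeasureTheory.Measure.restrict_restrict measurableSet_Ioc,
      Set.inter_eq_left.mpr (fun t ht => ht.1)]
  have htop : ∀ a : ℝ, H =O[atTop] (· ^ (-a)) := by
    intro a
    rw [Asymptotics.isBigO_iff]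
    refine ⟨1, ?_⟩
    filter_upwards [Filter.eventually_gt_atTop 1] with t ht
    have : H t = 0 := by
      apply Set.indicator_of_notMem
      intro hmem; exact absurd hmem.2 (not_le.mpr ht)
    rw [this, norm_zero]
    positivity
  have hbot : H =O[nhdsWithin 0 (Set.Ioi 0)] (· ^ (-(0:ℝ))) := by
    rw [Asymptotics.isBigO_iff]
    refine ⟨2 * M, ?_⟩
    filter_upwards [self_mem_nhdsWithin] with t ht
    rw [neg_zero, Real.rpow_zero, norm_one, mul_one]
    by_cases hmem : t ∈ Set.Ioc (0:ℝ) 1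
    · rw [hHdef, Set.indicator_of_mem hmem]; exact hhb t hmem
    · rw [hHdef, Set.indicator_of_notMem hmem, norm_zero]; linarith
  have hana : AnalyticOnNhd ℂ g {σ : ℂ | (-1:ℝ) < σ.re} := by
    rw [hgm]
    apply DifferentiableOn.analyticOnNhd ?_ hUopen
    intro σ hσ
    have hσ' : (-1:ℝ) < σ.re := hσ
    have hd1 : DifferentiableAt ℂ (mellin H) (σ + 1) := by
      apply mellin_differentiableAt_of_isBigO_rpow hH_loc (htop (σ.re + 2)) ?_ hbot ?_
      · simp only [Complex.add_re, Complex.one_re]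
        linarith
      · simp only [Complex.add_re, Complex.one_re]
        linarith
    exact (hd1.comp σ ((differentiableAt_id).add_const 1)).differentiableWithinAt
  -- vertical bound
  obtain ⟨T, hT⟩ : ∃ T : ℝ, ∀ σ : ℂ, σ₀ ≤ σ.re → σ.re ≤ 2 * M →
      T ≤ ‖σ + 1‖ → ‖g σ‖ < 1 := by
    have hσ₀1 : (0:ℝ) < σ₀ + 1 := by linarith
    -- choice of the split points a' < b
    set ε : ℝ := min 1 ((σ₀ + 1) / (6 * M)) with hεdef
    have hε0 : 0 < ε := lt_min one_pos (by positivity)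
    have hε1 : ε ≤ 1 := min_le_left _ _
    have hε2 : ε ≤ (σ₀ + 1) / (6 * M) := min_le_right _ _
    set a : ℝ := ε ^ ((σ₀ + 1)⁻¹) with hadef
    have ha0 : 0 < a := Real.rpow_pos_of_pos hε0 _
    have ha1 : a ≤ 1 := Real.rpow_le_one hε0.le hε1 (by positivity)
    have hapow : a ^ (σ₀ + 1) = ε := by
      rw [hadef, ← Real.rpow_mul hε0.le, inv_mul_cancel₀ hσ₀1.ne', Real.rpow_one]
    set c : ℝ := min σ₀ 0 with hcdef
    have hc0 : c ≤ 0 := min_le_right _ _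
    have hcσ : c ≤ σ₀ := min_le_left _ _
    set D : ℝ := (2:ℝ) ^ (-c) with hDdef
    have hD0 : 0 < D := Real.rpow_pos_of_pos two_pos _
    have hxc : ∀ x : ℝ, 1/2 ≤ x → x ≤ 1 → ∀ r : ℝ, c ≤ r → x ^ r ≤ D := by
      intro x hx2 hx1 r hr
      have hx0 : (0:ℝ) < x := lt_of_lt_of_le one_half_pos hx2
      have h1 : x ^ r ≤ x ^ c := Real.rpow_le_rpow_of_exponent_ge hx0 hx1 hr
      have h2 : x ^ c = (x⁻¹) ^ (-c) := by
        rw [Real.inv_rpow hx0.le, Real.rpow_neg hx0.le, inv_inv]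
      have h3 : (x⁻¹ : ℝ) ≤ 2 := by
        rw [inv_le_comm₀ hx0 two_pos]
        linarith
      have h4 : (x⁻¹) ^ (-c) ≤ (2:ℝ) ^ (-c) :=
        Real.rpow_le_rpow (inv_nonneg.mpr hx0.le) h3 (by linarith)
      rw [hDdef]; rw [h2] at h1; linarith
    set δ : ℝ := min (1/2) (1 / (6 * M * D)) with hδdef
    have hδ0 : 0 < δ := lt_min one_half_pos (by positivity)
    have hδhalf : δ ≤ 1/2 := min_le_left _ _
    have hδD : δ ≤ 1 / (6 * M * D) := min_le_right _ _
    set b : ℝ := 1 - δ with hbdef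
    have hb2 : 1/2 ≤ b := by rw [hbdef]; linarith
    have hb1 : b < 1 := by rw [hbdef]; linarith
    have hb0 : (0:ℝ) < b := by linarith
    set a' : ℝ := min a b with ha'def
    have ha'0 : 0 < a' := lt_min ha0 hb0
    have ha'b : a' ≤ b := min_le_right _ _
    have ha'1 : a' ≤ 1 := le_trans (min_le_left _ _) ha1
    -- continuity of deriv f₁ in the interior
    have hdfc : ContinuousOn (deriv f₁) (Set.Ioo (0:ℝ) 1) := by
      have h1 : ContinuousOn (derivWithin f₁ (Set.Icc 0 1)) (Set.Icc (0:ℝ) 1) :=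
        hf₁.continuousOn_derivWithin (uniqueDiffOn_Icc zero_lt_one) (by norm_num)
      refine (h1.mono Set.Ioo_subset_Icc_self).congr ?_
      intro t ht
      exact (derivWithin_of_mem_nhds (Icc_mem_nhds ht.1 ht.2)).symm
    set p : ℝ → ℝ := fun t => deriv f₁ t - ((t * f₁ t) * t ^ 2 - G t * (2 * t)) / (t ^ 2) ^ 2
      with hpdef
    have hpc : ContinuousOn p (Set.Ioo (0:ℝ) 1) := by
      apply hdfc.sub
      apply ContinuousOn.div
      · apply ContinuousOn.sub
        · exact ((continuousOn_id.mul (hf₁.continuousOn.mono Set.Ioo_subset_Icc_self)).mul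
            (continuousOn_pow 2))
        · exact (hGcont.mono Set.Ioo_subset_Icc_self).mul (continuousOn_const.mul continuousOn_id)
      · exact (continuousOn_pow 2).pow 2
      · intro t ht
        exact pow_ne_zero 2 (pow_ne_zero 2 ht.1.ne')
    have hIcc_sub : Set.Icc a' b ⊆ Set.Ioo (0:ℝ) 1 := fun t ht =>
      ⟨lt_of_lt_of_le ha'0 ht.1, lt_of_le_of_lt ht.2 hb1⟩
    obtain ⟨C₁, hC₁⟩ := isCompact_Icc.exists_bound_of_continuousOn (hpc.mono hIcc_sub)
    set C : ℝ := max C₁ 0 with hCdef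
    have hC0 : 0 ≤ C := le_max_right _ _
    have hCb : ∀ t ∈ Set.Icc a' b, ‖p t‖ ≤ C := fun t ht => (hC₁ t ht).trans (le_max_left _ _)
    refine ⟨3 * (4 * M + C + 1), ?_⟩
    have hT0 : (0:ℝ) < 3 * (4 * M + C + 1) := by nlinarith
    intro σ hσlo _ hσT
    have hσre : -1 < σ.re := lt_of_lt_of_le hσ₀ hσlo
    have hσne : σ ≠ -1 := by
      intro e
      rw [e] at hσlo
      simp only [Complex.neg_re, Complex.one_re] at hσlo
      linarith
    have habs0 : (0:ℝ) < ‖σ + 1‖ := lt_of_lt_of_le hT0 hσT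
    -- interval integrability on subintervals
    have hFii : IntervalIntegrable (fun t : ℝ => (t:ℂ) ^ σ * h t) volume 0 1 := by
      rw [intervalIntegrable_iff_integrableOn_Ioc_of_le zero_le_one]; exact hint σ hσre
    have hsubi : ∀ u v : ℝ, u ≤ v → 0 ≤ u → v ≤ 1 →
        IntervalIntegrable (fun t : ℝ => (t:ℂ) ^ σ * h t) volume u v := by
      intro u v huv hu hv
      apply hFii.mono_set
      rw [Set.uIcc_of_le zero_le_one, Set.uIcc_of_le huv]
      exact Set.Icc_subset_Icc hu hv
    have hii1 := hsubi 0 a' ha'0.le le_rfl ha'1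
    have hii2 := hsubi a' b ha'b ha'0.le hb1.le
    have hii3 := hsubi b 1 hb1.le hb0.le le_rfl
    have hii4 := hsubi a' 1 ha'1 ha'0.le le_rfl
    have hsplit : g σ = (∫ t in (0:ℝ)..a', (t:ℂ) ^ σ * h t)
        + ((∫ t in a'..b, (t:ℂ) ^ σ * h t) + (∫ t in b..(1:ℝ), (t:ℂ) ^ σ * h t)) := by
      rw [← hIoc σ, ← intervalIntegral.integral_add_adjacent_intervals hii1 hii4,
        ← intervalIntegral.integral_add_adjacent_intervals hii2 hii3]
    -- tail at 0
    have htail0 : ‖∫ t in (0:ℝ)..a', (t:ℂ) ^ σ * h t‖ ≤ 1/3 := by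
      rw [intervalIntegral.integral_of_le ha'0.le]
      have hdom : MeasureTheory.IntegrableOn (fun t : ℝ => 2 * M * t ^ σ.re)
          (Set.Ioc (0:ℝ) a') := by
        have := (intervalIntegral.intervalIntegrable_rpow' (a := 0) (b := a') hσre).const_mul
          (2*M)
        rwa [intervalIntegrable_iff_integrableOn_Ioc_of_le ha'0.le] at this
      have h1 : ‖∫ t in Set.Ioc (0:ℝ) a', (t:ℂ) ^ σ * h t‖
          ≤ ∫ t in Set.Ioc (0:ℝ) a', 2 * M * t ^ σ.re := by
        apply MeasureTheory.norm_integral_le_of_norm_le hdom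
        rw [MeasureTheory.ae_restrict_iff' measurableSet_Ioc]
        filter_upwards with t ht
        rw [norm_mul, Complex.norm_cpow_eq_rpow_re_of_pos ht.1]
        calc t ^ σ.re * ‖h t‖ ≤ t ^ σ.re * (2*M) :=
              mul_le_mul_of_nonneg_left (hhb t ⟨ht.1, ht.2.trans ha'1⟩)
                (Real.rpow_nonneg ht.1.le _)
          _ = 2 * M * t ^ σ.re := by ring
      have h2 : ∫ t in Set.Ioc (0:ℝ) a', 2 * M * t ^ σ.re
          = 2 * M * (a' ^ (σ.re+1) / (σ.re+1)) := by
        rw [MeasureTheory.integral_const_mul, ← intervalIntegral.integral_of_le ha'0.le,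
          integral_rpow (Or.inl hσre), Real.zero_rpow (by linarith : σ.re + 1 ≠ 0), sub_zero]
      have h3 : a' ^ (σ.re+1) ≤ a ^ (σ₀+1) := by
        calc a' ^ (σ.re+1) ≤ a' ^ (σ₀+1) :=
              Real.rpow_le_rpow_of_exponent_ge ha'0 ha'1 (by linarith)
          _ ≤ a ^ (σ₀+1) := Real.rpow_le_rpow ha'0.le (min_le_left _ _) (by linarith)
      have h4 : a' ^ (σ.re+1) / (σ.re+1) ≤ a ^ (σ₀+1) / (σ₀+1) := by
        apply div_le_div₀ (Real.rpow_nonneg ha0.le _) h3 hσ₀1 (by linarith)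
      have h5 : 2 * M * (a ^ (σ₀+1) / (σ₀+1)) ≤ 1/3 := by
        rw [hapow]
        have h6 : ε / (σ₀+1) ≤ 1 / (6*M) := by
          rw [div_le_div_iff₀ hσ₀1 (by positivity)]
          have h7 : ε * (6*M) ≤ σ₀ + 1 := by
            calc ε * (6*M) ≤ ((σ₀+1)/(6*M)) * (6*M) := by
                  apply mul_le_mul_of_nonneg_right hε2 (by positivity)
              _ = σ₀ + 1 := by field_simp
          linarith
        calc 2 * M * (ε / (σ₀+1)) ≤ 2 * M * (1/(6*M)) := by
              apply mul_le_mul_of_nonneg_left h6 (by linarith)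
          _ = 1/3 := by field_simp; ring
      calc ‖∫ t in Set.Ioc (0:ℝ) a', (t:ℂ) ^ σ * h t‖
          ≤ 2 * M * (a' ^ (σ.re+1) / (σ.re+1)) := by rw [← h2]; exact h1
        _ ≤ 2 * M * (a ^ (σ₀+1) / (σ₀+1)) := by
            apply mul_le_mul_of_nonneg_left h4 (by linarith)
        _ ≤ 1/3 := h5
    -- tail at 1
    have htail1 : ‖∫ t in b..(1:ℝ), (t:ℂ) ^ σ * h t‖ ≤ 1/3 := by
      have key : ∀ x ∈ Set.uIoc b 1, ‖(x:ℂ) ^ σ * h x‖ ≤ 2*M*D := by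
        intro x hx
        rw [Set.uIoc_of_le hb1.le] at hx
        have hx0 : (0:ℝ) < x := lt_trans hb0 hx.1
        rw [norm_mul, Complex.norm_cpow_eq_rpow_re_of_pos hx0]
        have hA : x ^ σ.re ≤ D := hxc x (hb2.trans hx.1.le) hx.2 σ.re (hcσ.trans hσlo)
        have hB : ‖h x‖ ≤ 2*M := hhb x ⟨hx0, hx.2⟩
        calc x ^ σ.re * ‖h x‖ ≤ D * (2*M) :=
              mul_le_mul hA hB (norm_nonneg _) hD0.le
          _ = 2*M*D := by ring
      have h1 := intervalIntegral.norm_integral_le_of_norm_le_const key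
      have h2 : |1 - b| = δ := by rw [hbdef]; rw [abs_of_nonneg (by linarith)]; ring
      rw [h2] at h1
      calc ‖∫ t in b..(1:ℝ), (t:ℂ) ^ σ * h t‖ ≤ 2*M*D*δ := h1
        _ ≤ 2*M*D * (1/(6*M*D)) := by
            apply mul_le_mul_of_nonneg_left hδD (by positivity)
        _ = 1/3 := by field_simp; ring
    -- middle by integration by parts
    have hmid : ‖∫ t in a'..b, (t:ℂ) ^ σ * h t‖ < 1/3 := by
      have hmemI : ∀ x ∈ Set.uIcc a' b, x ∈ Set.Ioo (0:ℝ) 1 := by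
        intro x hx
        rw [Set.uIcc_of_le ha'b] at hx
        exact hIcc_sub hx
      have hu : ∀ x ∈ Set.uIcc a' b, HasDerivAt h ((p x : ℝ) : ℂ) x := by
        intro x hx
        obtain ⟨hx0, hx1⟩ := hmemI x hx
        have hf₁d : HasDerivAt f₁ (deriv f₁ x) x := by
          have hd : DifferentiableOn ℝ f₁ (Set.Icc 0 1) :=
            hf₁.differentiableOn (by norm_num)
          exact ((hd x ⟨hx0.le, hx1.le⟩).differentiableAt
            (Icc_mem_nhds hx0 hx1)).hasDerivAt
        have hGd : HasDerivAt G (x * f₁ x) x := by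
          apply intervalIntegral.integral_hasDerivAt_right
          · apply ContinuousOn.intervalIntegrable
            rw [Set.uIcc_of_le hx0.le]
            exact hxf.mono (Set.Icc_subset_Icc le_rfl hx1.le)
          · exact ⟨Set.Ioo 0 1, Ioo_mem_nhds hx0 hx1,
              (hxf.mono Set.Ioo_subset_Icc_self).aestronglyMeasurable measurableSet_Ioo⟩
          · exact continuousAt_id.mul
              (hf₁.continuousOn.continuousAt (Icc_mem_nhds hx0 hx1))
        have hx2 : (x:ℝ) ^ 2 ≠ 0 := pow_ne_zero 2 hx0.ne'
        have hden : HasDerivAt (fun t : ℝ => t ^ 2) (2*x) x := by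
          simpa using hasDerivAt_pow 2 x
        have hq : HasDerivAt (fun t : ℝ => G t / t ^ 2)
            (((x * f₁ x) * x ^ 2 - G x * (2*x)) / (x ^ 2) ^ 2) x := hGd.div hden hx2
        have hw : HasDerivAt (fun t : ℝ => f₁ t - 1 / t ^ 2 * G t) (p x) x := by
          have he : (fun t : ℝ => f₁ t - 1 / t ^ 2 * G t)
              = fun t : ℝ => f₁ t - G t / t ^ 2 := by
            funext t; ring
          rw [he, hpdef]
          exact hf₁d.sub hq
        exact hw.ofReal_comp
      have hv : ∀ x ∈ Set.uIcc a' b,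
          HasDerivAt (fun t : ℝ => (t:ℂ) ^ (σ+1) / (σ+1)) ((x:ℂ) ^ σ) x := fun x hx =>
        hasDerivAt_ofReal_cpow_const' (hmemI x hx).1.ne' hσne
      have hu' : IntervalIntegrable (fun t : ℝ => ((p t : ℝ) : ℂ)) volume a' b :=
        (Complex.continuous_ofReal.comp_continuousOn (hpc.mono hmemI)).intervalIntegrable
      have hv' : IntervalIntegrable (fun t : ℝ => (t:ℂ) ^ σ) volume a' b := by
        apply ContinuousOn.intervalIntegrable
        intro x hx
        exact (Complex.continuousAt_ofReal_cpow_const x σ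
          (Or.inr (hmemI x hx).1.ne')).continuousWithinAt
      have hibp := intervalIntegral.integral_mul_deriv_eq_deriv_mul hu hv hu' hv'
      have hcomm : (∫ t in a'..b, (t:ℂ) ^ σ * h t)
          = ∫ x in a'..b, h x * (x:ℂ) ^ σ :=
        intervalIntegral.integral_congr (fun x _ => mul_comm _ _)
      have hvb : ∀ x : ℝ, 0 < x → x ≤ 1 →
          ‖(x:ℂ) ^ (σ+1) / (σ+1)‖ ≤ 1 / ‖σ+1‖ := by
        intro x hx0 hx1
        rw [norm_div,
          Complex.norm_cpow_eq_rpow_re_of_pos hx0]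
        apply div_le_div₀ zero_le_one (Real.rpow_le_one hx0.le hx1 ?_) habs0 le_rfl
        simp only [Complex.add_re, Complex.one_re]
        linarith
      have hb1' : ‖h b * ((b:ℂ) ^ (σ+1) / (σ+1))‖ ≤ 2*M * (1/‖σ+1‖) := by
        rw [norm_mul]
        exact mul_le_mul (hhb b ⟨hb0, hb1.le⟩) (hvb b hb0 hb1.le) (norm_nonneg _)
          (by linarith)
      have ha1' : ‖h a' * ((a':ℂ) ^ (σ+1) / (σ+1))‖ ≤ 2*M * (1/‖σ+1‖) := by
        rw [norm_mul]
        exact mul_le_mul (hhb a' ⟨ha'0, ha'1⟩) (hvb a' ha'0 ha'1) (norm_nonneg _)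
          (by linarith)
      have hint' : ‖∫ x in a'..b, ((p x : ℝ) : ℂ) * ((x:ℂ) ^ (σ+1) / (σ+1))‖
          ≤ C * (1/‖σ+1‖) := by
        have key : ∀ x ∈ Set.uIoc a' b,
            ‖((p x : ℝ) : ℂ) * ((x:ℂ) ^ (σ+1) / (σ+1))‖ ≤ C * (1/‖σ+1‖) := by
          intro x hx
          rw [Set.uIoc_of_le ha'b] at hx
          have hxm : x ∈ Set.Icc a' b := ⟨hx.1.le, hx.2⟩
          have hxo := hIcc_sub hxm
          rw [norm_mul, Complex.norm_real]
          exact mul_le_mul (hCb x hxm) (hvb x hxo.1 hxo.2.le) (norm_nonneg _) hC0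
        have h1 := intervalIntegral.norm_integral_le_of_norm_le_const key
        have h2 : |b - a'| ≤ 1 := by rw [abs_of_nonneg (by linarith)]; linarith
        calc ‖∫ x in a'..b, ((p x : ℝ) : ℂ) * ((x:ℂ) ^ (σ+1) / (σ+1))‖
            ≤ C * (1/‖σ+1‖) * |b - a'| := h1
          _ ≤ C * (1/‖σ+1‖) * 1 := by
              apply mul_le_mul_of_nonneg_left h2 (by positivity)
          _ = C * (1/‖σ+1‖) := by ring
      rw [hcomm, hibp]
      calc ‖h b * ((b:ℂ) ^ (σ+1) / (σ+1)) - h a' * ((a':ℂ) ^ (σ+1) / (σ+1))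
            - ∫ x in a'..b, ((p x : ℝ) : ℂ) * ((x:ℂ) ^ (σ+1) / (σ+1))‖
          ≤ ‖h b * ((b:ℂ) ^ (σ+1) / (σ+1)) - h a' * ((a':ℂ) ^ (σ+1) / (σ+1))‖
            + ‖∫ x in a'..b, ((p x : ℝ) : ℂ) * ((x:ℂ) ^ (σ+1) / (σ+1))‖ := norm_sub_le _ _
        _ ≤ (‖h b * ((b:ℂ) ^ (σ+1) / (σ+1))‖ + ‖h a' * ((a':ℂ) ^ (σ+1) / (σ+1))‖)
            + ‖∫ x in a'..b, ((p x : ℝ) : ℂ) * ((x:ℂ) ^ (σ+1) / (σ+1))‖ := by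
            apply add_le_add_left (norm_sub_le _ _)
        _ ≤ (2*M * (1/‖σ+1‖) + 2*M * (1/‖σ+1‖))
            + C * (1/‖σ+1‖) := by
            apply add_le_add (add_le_add hb1' ha1') hint'
        _ = (4*M + C) / ‖σ+1‖ := by ring
        _ < 1/3 := by
            rw [div_lt_iff₀ habs0]
            have : (4*M + C) < (1/3) * (3 * (4 * M + C + 1)) := by linarith
            calc (4*M + C) < (1/3) * (3 * (4 * M + C + 1)) := this
              _ ≤ (1/3) * ‖σ+1‖ := by
                  apply mul_le_mul_of_nonneg_left hσT (by norm_num)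
    rw [hsplit]
    calc ‖(∫ t in (0:ℝ)..a', (t:ℂ) ^ σ * h t)
          + ((∫ t in a'..b, (t:ℂ) ^ σ * h t) + (∫ t in b..(1:ℝ), (t:ℂ) ^ σ * h t))‖
        ≤ ‖∫ t in (0:ℝ)..a', (t:ℂ) ^ σ * h t‖
          + (‖∫ t in a'..b, (t:ℂ) ^ σ * h t‖ + ‖∫ t in b..(1:ℝ), (t:ℂ) ^ σ * h t‖) :=
          (norm_add_le _ _).trans (add_le_add_right (norm_add_le _ _) _)
      _ < 1 := by linarith
  -- now the main argument
  have hSet : {σ : ℂ | σ₀ < σ.re ∧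
      (∫ t in (0:ℝ)..1, (t:ℂ) ^ σ * h t) = 1} =
      {σ : ℂ | σ₀ < σ.re ∧ g σ = 1} := by
    ext σ; simp only [Set.mem_setOf_eq, hIoc]
  rw [hSet]
  by_contra hinf
  replace hinf : Set.Infinite {σ : ℂ | σ₀ < σ.re ∧ g σ = 1} := hinf
  set K : Set ℂ := Metric.closedBall (-1 : ℂ) T ∩ {σ : ℂ | σ₀ ≤ σ.re} with hKdef
  have hKcomp : IsCompact K :=
    (isCompact_closedBall _ _).inter_right (isClosed_le continuous_const Complex.continuous_re)
  have hgne : ∀ σ : ℂ, σ₀ < σ.re → ‖g σ‖ < 1 → g σ ≠ 1 := by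
    intro σ _ hn he; rw [he] at hn; simp at hn
  have hsub : {σ : ℂ | σ₀ < σ.re ∧ g σ = 1} ⊆ K := by
    intro σ hσ
    obtain ⟨h1, h2⟩ := hσ
    refine ⟨?_, le_of_lt h1⟩
    rw [Metric.mem_closedBall]
    by_contra hout
    push_neg at hout
    rcases le_or_gt σ.re (2*M) with hre | hre
    · exact hgne σ h1 (hT σ h1.le hre (by
        have : dist σ (-1) = ‖σ + 1‖ := by
          rw [Complex.dist_eq]; ring_nf
        linarith [hout, this ▸ hout.le])) h2
    · refine hgne σ h1 ?_ h2
      have hb := hbound σ (by linarith)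
      have : 2 * M / (σ.re + 1) < 1 := by
        rw [div_lt_one (by linarith)]; linarith
      linarith
  obtain ⟨z₀, hz₀K, hz₀⟩ := hinf.exists_accPt_of_subset_isCompact hKcomp hsub
  have hz₀U : z₀ ∈ {σ : ℂ | (-1:ℝ) < σ.re} := lt_of_lt_of_le hσ₀ hz₀K.2
  have hfreq : ∃ᶠ z in nhdsWithin z₀ {z₀}ᶜ, g z = (fun _ => (1:ℂ)) z := by
    rw [accPt_iff_frequently] at hz₀
    rw [frequently_nhdsWithin_iff]
    exact hz₀.mono (fun z hz => ⟨hz.2.2, hz.1⟩)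
  have heq := hana.eqOn_of_preconnected_of_frequently_eq analyticOnNhd_const
    (convex_halfSpace_re_gt (-1)).isPreconnected hz₀U hfreq
  -- contradiction at a large real point
  set x : ℂ := ((2*M : ℝ) : ℂ) with hxdef
  have hxU : x ∈ {σ : ℂ | (-1:ℝ) < σ.re} := by
    simp only [Set.mem_setOf_eq, hxdef, Complex.ofReal_re]; linarith
  have h1 : g x = 1 := heq hxU
  have h2 : ‖g x‖ < 1 := by
    have hb := hbound x (by simpa [hxdef] using by linarith : -1 < x.re)
    have hre : x.re = 2*M := by simp [hxdef]
    rw [hre] at hb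
    have : 2 * M / (2*M + 1) < 1 := by
      rw [div_lt_one (by linarith)]; linarith
    linarith
  rw [h1] at h2; simp at h2
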